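/- Let P_m = X_1 X_2 ⋯ X_m where X_1, …, X_m are independent random 2n×2n matrices, with X_i the top-left 2n×2n sub-block of a Haar-distributed (L_i+2n)×(L_i+2n) real orthogonal matrix. Then E[Tr(P_m²)] = ∏_{i=1}^m 2n/(L_i + 2n). -/

import Mathlib

open MeasureTheory Matrix

/-- Borel measurable structure on the orthogonal group. -/
noncomputable instance (M : ℕ) : MeasurableSpace (Matrix.orthogonalGroup (Fin M) ℝ) :=
  borel _

instance (M : ℕ) : BorelSpace (Matrix.orthogonalGroup (Fin M) ℝ) := ⟨rfl⟩

namespace OrthAux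

variable {M : ℕ}

abbrev G (M : ℕ) := Matrix.orthogonalGroup (Fin M) ℝ

lemma entry_continuous (k j : Fin M) :
    Continuous fun Q : G M => (Q : Matrix (Fin M) (Fin M) ℝ) k j :=
  Continuous.comp (continuous_apply j) (Continuous.comp (continuous_apply k) continuous_subtype_val)

lemma col_orth (Q : G M) (j j' : Fin M) :
    ∑ k, (Q : Matrix (Fin M) (Fin M) ℝ) k j * (Q : Matrix (Fin M) (Fin M) ℝ) k j'
      = if j = j' then (1:ℝ) else 0 := by
  have h : star (Q : Matrix (Fin M) (Fin M) ℝ) * (Q : Matrix (Fin M) (Fin M) ℝ) = 1 := Q.2.1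
  have h2 : (star (Q : Matrix (Fin M) (Fin M) ℝ) * (Q : Matrix (Fin M) (Fin M) ℝ)) j j'
      = (1 : Matrix (Fin M) (Fin M) ℝ) j j' := by rw [h]
  simpa [Matrix.mul_apply, Matrix.one_apply, Matrix.star_apply] using h2

lemma entry_abs_le (Q : G M) (k j : Fin M) : |(Q : Matrix (Fin M) (Fin M) ℝ) k j| ≤ 1 := by
  have h := col_orth Q j j
  rw [if_pos rfl] at h
  rw [abs_le_one_iff_mul_self_le_one]
  calc (Q : Matrix (Fin M) (Fin M) ℝ) k j * (Q : Matrix (Fin M) (Fin M) ℝ) k j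
      ≤ ∑ k', (Q : Matrix (Fin M) (Fin M) ℝ) k' j * (Q : Matrix (Fin M) (Fin M) ℝ) k' j :=
        Finset.single_le_sum (f := fun k' => (Q : Matrix (Fin M) (Fin M) ℝ) k' j * (Q : Matrix (Fin M) (Fin M) ℝ) k' j) (fun i _ => mul_self_nonneg _) (Finset.mem_univ k)
    _ = 1 := h

lemma integrable_entry_mul (μ : Measure (G M)) [IsProbabilityMeasure μ] (k j k' j' : Fin M) :
    Integrable (fun Q : G M =>
      (Q : Matrix (Fin M) (Fin M) ℝ) k j * (Q : Matrix (Fin M) (Fin M) ℝ) k' j') μ := by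
  refine (integrable_const (1:ℝ)).mono'
    (((entry_continuous k j).mul (entry_continuous k' j')).aestronglyMeasurable)
    (Filter.Eventually.of_forall fun Q => ?_)
  rw [Real.norm_eq_abs, abs_mul]
  exact mul_le_one₀ (entry_abs_le Q k j) (abs_nonneg _) (entry_abs_le Q k' j')


/-- signed permutation matrix -/
def sp (σ : Equiv.Perm (Fin M)) (ε : Fin M → ℝ) : Matrix (Fin M) (Fin M) ℝ :=
  Matrix.of fun a b => if σ a = b then ε a else 0

lemma sp_mem (σ : Equiv.Perm (Fin M)) (ε : Fin M → ℝ) (hε : ∀ t, ε t * ε t = 1) :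
    sp σ ε ∈ Matrix.orthogonalGroup (Fin M) ℝ := by
  rw [Matrix.mem_orthogonalGroup_iff]
  ext a b
  simp only [Matrix.mul_apply, Matrix.star_apply, sp, Matrix.of_apply, star_trivial,
    Matrix.one_apply]
  rw [Finset.sum_eq_single (σ a)]
  · by_cases hab : a = b
    · subst hab; simp [hε a]
    · have : σ b ≠ σ a := fun h => hab (σ.injective h).symm
      simp [this, hab]
  · intro c _ hc
    simp [Ne.symm hc]
  · simp

lemma sp_mul_apply (σ : Equiv.Perm (Fin M)) (ε : Fin M → ℝ) (hε : ∀ t, ε t * ε t = 1)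
    (Q : G M) (k j : Fin M) :
    (((⟨sp σ ε, sp_mem σ ε hε⟩ : G M) * Q : G M) : Matrix (Fin M) (Fin M) ℝ) k j
      = ε k * (Q : Matrix (Fin M) (Fin M) ℝ) (σ k) j := by
  have : ((⟨sp σ ε, sp_mem σ ε hε⟩ : G M) * Q : G M).val = sp σ ε * Q.val := rfl
  rw [this, Matrix.mul_apply]
  rw [Finset.sum_eq_single (σ k)]
  · simp [sp]
  · intro c _ hc; simp [sp, Ne.symm hc]
  · simp

lemma integral_inv (μ : Measure (G M)) [IsProbabilityMeasure μ]
    (hinv : ∀ U : G M, Measure.map (fun Q => U * Q) μ = μ)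
    (f : G M → ℝ) (hf : Continuous f) (U : G M) :
    ∫ Q, f (U * Q) ∂μ = ∫ Q, f Q ∂μ := by
  have hc : Continuous fun Q : G M => U * Q := by
    rw [continuous_induced_rng]
    have : (Subtype.val ∘ fun Q : G M => U * Q) = fun Q : G M => U.val * Q.val := rfl
    rw [this]
    exact continuous_const.matrix_mul continuous_subtype_val
  conv_rhs => rw [← hinv U]
  rw [integral_map hc.aemeasurable hf.aestronglyMeasurable]

lemma moment_rel (μ : Measure (G M)) [IsProbabilityMeasure μ]
    (hinv : ∀ U : G M, Measure.map (fun Q => U * Q) μ = μ)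
    (σ : Equiv.Perm (Fin M)) (ε : Fin M → ℝ) (hε : ∀ t, ε t * ε t = 1)
    (k j k' j' : Fin M) :
    ∫ Q : G M, (Q : Matrix (Fin M) (Fin M) ℝ) k j * (Q : Matrix (Fin M) (Fin M) ℝ) k' j' ∂μ
      = ε k * ε k' *
        ∫ Q : G M, (Q : Matrix (Fin M) (Fin M) ℝ) (σ k) j * (Q : Matrix (Fin M) (Fin M) ℝ) (σ k') j' ∂μ := by
  have := integral_inv μ hinv
    (fun Q : G M => (Q : Matrix (Fin M) (Fin M) ℝ) k j * (Q : Matrix (Fin M) (Fin M) ℝ) k' j')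
    ((entry_continuous k j).mul (entry_continuous k' j'))
    (⟨sp σ ε, sp_mem σ ε hε⟩ : G M)
  rw [← this]
  simp_rw [sp_mul_apply σ ε hε]
  rw [← integral_const_mul]
  congr 1 with Q
  ring

lemma moment (hM : 0 < M) (μ : Measure (G M)) [IsProbabilityMeasure μ]
    (hinv : ∀ U : G M, Measure.map (fun Q => U * Q) μ = μ) (k j k' j' : Fin M) :
    ∫ Q : G M, (Q : Matrix (Fin M) (Fin M) ℝ) k j * (Q : Matrix (Fin M) (Fin M) ℝ) k' j' ∂μ
      = if k = k' ∧ j = j' then 1 / (M : ℝ) else 0 := by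
  have hoff : ∀ a b : Fin M, a ≠ b →
      (∫ Q : G M, (Q : Matrix (Fin M) (Fin M) ℝ) a j * (Q : Matrix (Fin M) (Fin M) ℝ) b j' ∂μ) = 0 := by
    intro a b hab
    have hε : ∀ t : Fin M, (if t = a then (-1:ℝ) else 1) * (if t = a then (-1:ℝ) else 1) = 1 := by
      intro t; split <;> norm_num
    have h := moment_rel μ hinv 1 (fun t => if t = a then (-1:ℝ) else 1) hε a j b j'
    simp [Ne.symm hab] at h
    linarith [h]
  have hdiag : ∀ a b : Fin M,
      (∫ Q : G M, (Q : Matrix (Fin M) (Fin M) ℝ) a j * (Q : Matrix (Fin M) (Fin M) ℝ) a j' ∂μ)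
      = ∫ Q : G M, (Q : Matrix (Fin M) (Fin M) ℝ) b j * (Q : Matrix (Fin M) (Fin M) ℝ) b j' ∂μ := by
    intro a b
    have h := moment_rel μ hinv (Equiv.swap a b) (fun _ => (1:ℝ)) (fun t => one_mul 1) a j a j'
    simpa [Equiv.swap_apply_left] using h
  have hsum : ∀ a : Fin M,
      (M : ℝ) * (∫ Q : G M, (Q : Matrix (Fin M) (Fin M) ℝ) a j * (Q : Matrix (Fin M) (Fin M) ℝ) a j' ∂μ)
      = if j = j' then 1 else 0 := by
    intro a
    have h1 : ∑ c : Fin M,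
        (∫ Q : G M, (Q : Matrix (Fin M) (Fin M) ℝ) c j * (Q : Matrix (Fin M) (Fin M) ℝ) c j' ∂μ)
        = ∫ Q : G M, ∑ c : Fin M,
            (Q : Matrix (Fin M) (Fin M) ℝ) c j * (Q : Matrix (Fin M) (Fin M) ℝ) c j' ∂μ :=
      (integral_finset_sum _ (fun c _ => integrable_entry_mul μ c j c j')).symm
    have h2 : (∫ Q : G M, ∑ c : Fin M,
        (Q : Matrix (Fin M) (Fin M) ℝ) c j * (Q : Matrix (Fin M) (Fin M) ℝ) c j' ∂μ)
        = if j = j' then 1 else 0 := by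
      simp_rw [col_orth]
      simp
    have h3 : ∑ c : Fin M,
        (∫ Q : G M, (Q : Matrix (Fin M) (Fin M) ℝ) c j * (Q : Matrix (Fin M) (Fin M) ℝ) c j' ∂μ)
        = (M : ℝ) * (∫ Q : G M, (Q : Matrix (Fin M) (Fin M) ℝ) a j * (Q : Matrix (Fin M) (Fin M) ℝ) a j' ∂μ) := by
      rw [Finset.sum_congr rfl (fun c _ => hdiag c a), Finset.sum_const, Finset.card_univ,
        Fintype.card_fin, nsmul_eq_mul]
    rw [← h3, h1, h2]
  have hM0 : (M : ℝ) ≠ 0 := Nat.cast_ne_zero.2 hM.ne'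
  by_cases hkk : k = k'
  · subst hkk
    have := hsum k
    by_cases hjj : j = j'
    · rw [if_pos ⟨rfl, hjj⟩]
      rw [if_pos hjj] at this
      field_simp at this ⊢
      linarith
    · rw [if_neg (fun h => hjj h.2)]
      rw [if_neg hjj] at this
      exact (mul_eq_zero.1 this).resolve_left hM0
  · rw [if_neg (fun h => hkk h.1)]
    exact hoff k k' hkk


lemma prod_entry {N : ℕ} : ∀ (m : ℕ) (A : Fin m → Matrix (Fin N) (Fin N) ℝ) (a b : Fin N),
    (List.ofFn A).prod a b
    = ∑ p : Fin (m+1) → Fin N,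
        if p 0 = a ∧ p (Fin.last m) = b then ∏ k : Fin m, A k (p k.castSucc) (p k.succ) else 0 := by
  intro m
  induction m with
  | zero =>
    intro A a b
    rw [show (List.ofFn A) = [] from List.ofFn_zero]
    rw [List.prod_nil]
    rw [← (Equiv.funUnique (Fin 1) (Fin N)).symm.sum_comp]
    simp only [Equiv.funUnique_symm_apply, Finset.univ_unique, Fin.last]
    by_cases hab : a = b
    · subst hab
      simp [Matrix.one_apply, Finset.sum_ite_eq']
    · rw [Matrix.one_apply_ne hab]
      symm
      apply Finset.sum_eq_zero
      intro x _
      rw [if_neg]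
      rintro ⟨h1, h2⟩
      exact hab (h1.symm.trans h2)
  | succ m ih =>
    intro A a b
    rw [List.ofFn_succ, List.prod_cons, Matrix.mul_apply]
    simp_rw [ih (fun i => A i.succ)]
    rw [← ((Fin.consEquiv (fun _ : Fin (m+2) => Fin N)).sum_comp _)]
    rw [Fintype.sum_prod_type]
    simp only [Fin.consEquiv_apply, Fin.cons_zero]
    -- RHS : ∑ x, ∑ g, if x = a ∧ Fin.cons x g (last (m+1)) = b then ∏ ...
    have hlast : ∀ (x : Fin N) (g : Fin (m+1) → Fin N),
        (Fin.cons x g : Fin (m+2) → Fin N) (Fin.last (m+1)) = g (Fin.last m) := by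
      intro x g
      rw [← Fin.succ_last, Fin.cons_succ]
    have hprod : ∀ (x : Fin N) (g : Fin (m+1) → Fin N),
        (∏ k : Fin (m+1), A k ((Fin.cons x g : Fin (m+2) → Fin N) k.castSucc) ((Fin.cons x g : Fin (m+2) → Fin N) k.succ))
        = A 0 x (g 0) * ∏ k : Fin m, A k.succ (g k.castSucc) (g k.succ) := by
      intro x g
      rw [Fin.prod_univ_succ, Fin.castSucc_zero, Fin.cons_zero, Fin.cons_succ]
      apply congrArg
      apply Finset.prod_congr rfl
      intro k _
      rw [← Fin.succ_castSucc, Fin.cons_succ, Fin.cons_succ]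
    calc ∑ c : Fin N, A 0 a c * ∑ g : Fin (m+1) → Fin N,
          (if g 0 = c ∧ g (Fin.last m) = b then ∏ k : Fin m, A k.succ (g k.castSucc) (g k.succ) else 0)
        = ∑ c : Fin N, ∑ g : Fin (m+1) → Fin N,
          (if g 0 = c ∧ g (Fin.last m) = b then A 0 a (g 0) * ∏ k : Fin m, A k.succ (g k.castSucc) (g k.succ) else 0) := by
          apply Finset.sum_congr rfl; intro c _
          rw [Finset.mul_sum]
          apply Finset.sum_congr rfl; intro g _
          by_cases h : g 0 = c ∧ g (Fin.last m) = b
          · rw [if_pos h, if_pos h, h.1]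
          · rw [if_neg h, if_neg h, mul_zero]
      _ = ∑ g : Fin (m+1) → Fin N, ∑ c : Fin N,
          (if g 0 = c ∧ g (Fin.last m) = b then A 0 a (g 0) * ∏ k : Fin m, A k.succ (g k.castSucc) (g k.succ) else 0) :=
          Finset.sum_comm
      _ = ∑ g : Fin (m+1) → Fin N,
          (if g (Fin.last m) = b then A 0 a (g 0) * ∏ k : Fin m, A k.succ (g k.castSucc) (g k.succ) else 0) := by
          apply Finset.sum_congr rfl; intro g _
          simp only [ite_and]
          rw [Finset.sum_ite_eq (Finset.univ) (g 0)
            (fun _ => if g (Fin.last m) = b then A 0 a (g 0) * ∏ k : Fin m, A k.succ (g k.castSucc) (g k.succ) else 0)]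
          simp
      _ = ∑ x : Fin N, ∑ g : Fin (m+1) → Fin N,
          (if x = a ∧ (Fin.cons x g : Fin (m+2) → Fin N) (Fin.last (m+1)) = b then
            ∏ k : Fin (m+1), A k ((Fin.cons x g : Fin (m+2) → Fin N) k.castSucc) ((Fin.cons x g : Fin (m+2) → Fin N) k.succ) else 0) := by
          simp_rw [hlast, hprod, ite_and]
          rw [Finset.sum_comm]
          apply Finset.sum_congr rfl; intro g _
          rw [Finset.sum_ite_eq' (Finset.univ) a
            (fun x => if g (Fin.last m) = b then A 0 x (g 0) * ∏ k : Fin m, A k.succ (g k.castSucc) (g k.succ) else 0)]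
          simp

lemma sum_ite_const {β : Type*} [Fintype β] (c : Prop) [Decidable c] (f : β → ℝ) :
    ∑ x : β, (if c then f x else 0) = if c then ∑ x : β, f x else 0 := by
  split <;> simp

lemma sum_collapse {ι : Type*} [Fintype ι] {α : Type*} [Fintype α] [DecidableEq α]
    (F G : ι → ℝ) (s e : ι → α) :
    (∑ a : α, ∑ b : α,
      (∑ p : ι, if s p = a ∧ e p = b then F p else 0) *
      (∑ q : ι, if s q = b ∧ e q = a then G q else 0))
    = ∑ p : ι, ∑ q : ι, if s q = e p ∧ e q = s p then F p * G q else 0 := by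
  have h1 : ∀ a b : α, (∑ p : ι, if s p = a ∧ e p = b then F p else 0) *
      (∑ q : ι, if s q = b ∧ e q = a then G q else 0)
      = ∑ p : ι, ∑ q : ι,
          if e p = b then if s q = b then if s p = a then if e q = a then F p * G q else 0 else 0 else 0 else 0 := by
    intro a b
    rw [Finset.sum_mul_sum]
    apply Finset.sum_congr rfl; intro p _
    apply Finset.sum_congr rfl; intro q _
    by_cases hp : s p = a ∧ e p = b
    · by_cases hq : s q = b ∧ e q = a
      · rw [if_pos hp, if_pos hq, if_pos hp.2, if_pos hq.1, if_pos hp.1, if_pos hq.2]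
      · rw [if_neg hq, mul_zero]
        by_cases h2 : e p = b
        · rw [if_pos h2]
          by_cases h3 : s q = b
          · rw [if_pos h3, if_pos hp.1, if_neg (fun h4 => hq ⟨h3, h4⟩)]
          · rw [if_neg h3]
        · rw [if_neg h2]
    · rw [if_neg hp, zero_mul]
      by_cases h2 : e p = b
      · rw [if_pos h2]
        by_cases h3 : s q = b
        · rw [if_pos h3, if_neg (fun h4 => hp ⟨h4, h2⟩)]
        · rw [if_neg h3]
      · rw [if_neg h2]
  simp_rw [h1]
  calc ∑ a : α, ∑ b : α, ∑ p : ι, ∑ q : ι,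
        (if e p = b then if s q = b then if s p = a then if e q = a then F p * G q else 0 else 0 else 0 else 0)
      = ∑ a : α, ∑ p : ι, ∑ b : α, ∑ q : ι,
        (if e p = b then if s q = b then if s p = a then if e q = a then F p * G q else 0 else 0 else 0 else 0) :=
        Finset.sum_congr rfl fun a _ => Finset.sum_comm
    _ = ∑ a : α, ∑ p : ι, ∑ q : ι, ∑ b : α,
        (if e p = b then if s q = b then if s p = a then if e q = a then F p * G q else 0 else 0 else 0 else 0) :=
        Finset.sum_congr rfl fun a _ => Finset.sum_congr rfl fun p _ => Finset.sum_comm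
    _ = ∑ p : ι, ∑ a : α, ∑ q : ι, ∑ b : α,
        (if e p = b then if s q = b then if s p = a then if e q = a then F p * G q else 0 else 0 else 0 else 0) :=
        Finset.sum_comm
    _ = ∑ p : ι, ∑ q : ι, ∑ a : α, ∑ b : α,
        (if e p = b then if s q = b then if s p = a then if e q = a then F p * G q else 0 else 0 else 0 else 0) :=
        Finset.sum_congr rfl fun p _ => Finset.sum_comm
    _ = ∑ p : ι, ∑ q : ι, (if s q = e p ∧ e q = s p then F p * G q else 0) := by
        apply Finset.sum_congr rfl; intro p _
        apply Finset.sum_congr rfl; intro q _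
        rw [Finset.sum_comm]
        simp only [sum_ite_const, Finset.sum_ite_eq, Finset.mem_univ, if_true, ite_and]


set_option maxHeartbeats 1000000 in
lemma trace_sq_expand {N : ℕ} (m : ℕ) (A : Fin m → Matrix (Fin N) (Fin N) ℝ) :
    Matrix.trace ((List.ofFn A).prod ^ 2)
    = ∑ p : Fin (m+1) → Fin N, ∑ q : Fin (m+1) → Fin N,
        if q 0 = p (Fin.last m) ∧ q (Fin.last m) = p 0 then
          (∏ k : Fin m, A k (p k.castSucc) (p k.succ)) *
          (∏ k : Fin m, A k (q k.castSucc) (q k.succ))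
        else 0 := by
  have h0 : Matrix.trace ((List.ofFn A).prod ^ 2)
      = ∑ a : Fin N, ∑ b : Fin N, (List.ofFn A).prod a b * (List.ofFn A).prod b a := by
    rw [sq, Matrix.trace]
    apply Finset.sum_congr rfl; intro a _
    rw [Matrix.diag_apply, Matrix.mul_apply]
  rw [h0]
  simp_rw [prod_entry m A]
  exact sum_collapse _ _ _ _

lemma prod_ite_zero {m : ℕ} (C : Fin m → Prop) [∀ k, Decidable (C k)] (c : Fin m → ℝ) :
    (∏ k : Fin m, if C k then c k else 0) = if ∀ k, C k then ∏ k : Fin m, c k else 0 := by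
  by_cases h : ∀ k, C k
  · rw [if_pos h]; exact Finset.prod_congr rfl fun k _ => if_pos (h k)
  · rw [if_neg h]
    push_neg at h; obtain ⟨k, hk⟩ := h
    exact Finset.prod_eq_zero (Finset.mem_univ k) (if_neg hk)

lemma path_eq_iff {N m : ℕ} (hm : 0 < m) (p q : Fin (m+1) → Fin N) :
    (∀ k : Fin m, p k.castSucc = q k.castSucc ∧ p k.succ = q k.succ) ↔ p = q := by
  constructor
  · intro h; funext j
    induction j using Fin.cases with
    | zero =>
      have h1 := (h ⟨0, hm⟩).1
      have h0 : (⟨0, hm⟩ : Fin m).castSucc = 0 := rfl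
      rwa [h0] at h1
    | succ k => exact (h k).2
  · rintro rfl k; exact ⟨rfl, rfl⟩

lemma count_loops {N m : ℕ} (hm : 0 < m) (c : ℝ) :
    (∑ p : Fin (m+1) → Fin N, if p (Fin.last m) = p 0 then c else 0) = (N:ℝ)^m * c := by
  rw [← ((Fin.snocEquiv (fun _ => Fin N)).sum_comp
    (fun p : Fin (m+1) → Fin N => if p (Fin.last m) = p 0 then c else 0))]
  rw [Fintype.sum_prod_type]
  have h0 : ∀ (x : Fin N) (g : Fin m → Fin N),
      (Fin.snocEquiv (fun _ => Fin N) (x, g)) (Fin.last m) = x := by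
    intro x g; simp [Fin.snocEquiv]
  have h1 : ∀ (x : Fin N) (g : Fin m → Fin N),
      (Fin.snocEquiv (fun _ => Fin N) (x, g)) 0 = g ⟨0, hm⟩ := by
    intro x g
    simp only [Fin.snocEquiv_apply]
    have h2 : (0 : Fin (m+1)) = (⟨0, hm⟩ : Fin m).castSucc := rfl
    rw [h2, Fin.snoc_castSucc]
  simp_rw [h0, h1]
  rw [Finset.sum_comm]
  simp only [Finset.sum_ite_eq', Finset.mem_univ, if_true]
  rw [Finset.sum_const, Finset.card_univ, nsmul_eq_mul]
  congr 1
  simp [Fintype.card_fun]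


end OrthAux


open OrthAux

set_option synthInstance.maxHeartbeats 1000000
set_option maxHeartbeats 1000000

/-- Let `P_m = X_1 ⋯ X_m` where the `X_i` are independent `2n × 2n` top-left sub-blocks of
Haar distributed `(L_i+2n) × (L_i+2n)` real orthogonal matrices (modelled by the product of
left-invariant probability measures on the orthogonal groups). Then
`E[Tr(P_m²)] = ∏_{i=1}^m 2n/(L_i+2n)`. -/
theorem expectation_trace_sq_product_truncated_orthogonal (n m : ℕ) (hn : 0 < n) (hm : 0 < m)
    (L : Fin m → ℕ)
    (μ : ∀ i : Fin m, Measure (Matrix.orthogonalGroup (Fin (L i + 2 * n)) ℝ))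
    [∀ i, IsProbabilityMeasure (μ i)]
    (hinv : ∀ (i : Fin m) (U : Matrix.orthogonalGroup (Fin (L i + 2 * n)) ℝ),
      Measure.map (fun Q => U * Q) (μ i) = μ i) :
    (∫ ω : ∀ i : Fin m, Matrix.orthogonalGroup (Fin (L i + 2 * n)) ℝ,
        Matrix.trace
          ((List.ofFn (fun i : Fin m =>
            Matrix.submatrix
              ((ω i : Matrix (Fin (L i + 2 * n)) (Fin (L i + 2 * n)) ℝ))
              (Fin.castLE (Nat.le_add_left (2 * n) (L i)))
              (Fin.castLE (Nat.le_add_left (2 * n) (L i))))).prod ^ 2)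
        ∂(Measure.pi μ))
      = ∏ i : Fin m, (2 * n : ℝ) / (L i + 2 * n) := by
  classical
  letI : ∀ i : Fin m, MeasureSpace (Matrix.orthogonalGroup (Fin (L i + 2 * n)) ℝ) :=
    fun i => ⟨μ i⟩
  haveI : ∀ i : Fin m, SigmaFinite (volume :
      Measure (Matrix.orthogonalGroup (Fin (L i + 2 * n)) ℝ)) :=
    fun i => inferInstanceAs (SigmaFinite (μ i))
  -- the sub-block map
  let X : ∀ i : Fin m, Matrix.orthogonalGroup (Fin (L i + 2 * n)) ℝ →
      Matrix (Fin (2 * n)) (Fin (2 * n)) ℝ := fun i Q =>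
    Matrix.submatrix ((Q : Matrix (Fin (L i + 2 * n)) (Fin (L i + 2 * n)) ℝ))
      (Fin.castLE (Nat.le_add_left (2 * n) (L i)))
      (Fin.castLE (Nat.le_add_left (2 * n) (L i)))
  -- per-coordinate integrands
  let f : (Fin (m+1) → Fin (2*n)) → (Fin (m+1) → Fin (2*n)) → ∀ k : Fin m,
      Matrix.orthogonalGroup (Fin (L k + 2 * n)) ℝ → ℝ := fun p q k Q =>
    X k Q (p k.castSucc) (p k.succ) * X k Q (q k.castSucc) (q k.succ)
  have hf_int : ∀ p q k, Integrable (f p q k) (μ k) := by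
    intro p q k
    exact integrable_entry_mul (μ k) _ _ _ _
  -- pointwise expansion
  have hpt : ∀ ω : ∀ i : Fin m, Matrix.orthogonalGroup (Fin (L i + 2 * n)) ℝ,
      Matrix.trace
          ((List.ofFn (fun i : Fin m =>
            Matrix.submatrix
              ((ω i : Matrix (Fin (L i + 2 * n)) (Fin (L i + 2 * n)) ℝ))
              (Fin.castLE (Nat.le_add_left (2 * n) (L i)))
              (Fin.castLE (Nat.le_add_left (2 * n) (L i))))).prod ^ 2)
      = ∑ p : Fin (m+1) → Fin (2*n), ∑ q : Fin (m+1) → Fin (2*n),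
          if q 0 = p (Fin.last m) ∧ q (Fin.last m) = p 0 then
            ∏ k : Fin m, f p q k (ω k)
          else 0 := by
    intro ω
    rw [trace_sq_expand m (fun i => X i (ω i))]
    apply Finset.sum_congr rfl; intro p _
    apply Finset.sum_congr rfl; intro q _
    by_cases hc : q 0 = p (Fin.last m) ∧ q (Fin.last m) = p 0
    · rw [if_pos hc, if_pos hc, ← Finset.prod_mul_distrib]
    · rw [if_neg hc, if_neg hc]
  simp only [hpt]
  -- each (p,q)-term is integrable
  have hterm_int : ∀ (p q : Fin (m+1) → Fin (2*n)),
      Integrable (fun ω : ∀ i : Fin m, Matrix.orthogonalGroup (Fin (L i + 2 * n)) ℝ =>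
        if q 0 = p (Fin.last m) ∧ q (Fin.last m) = p 0 then
          ∏ k : Fin m, f p q k (ω k) else 0) (Measure.pi μ) := by
    intro p q
    by_cases hc : q 0 = p (Fin.last m) ∧ q (Fin.last m) = p 0
    · simp only [if_pos hc]
      exact MeasureTheory.Integrable.fintype_prod_dep (f := f p q) (fun k => hf_int p q k)
    · simp only [if_neg hc]
      exact integrable_zero _ _ _
  rw [integral_finset_sum _ (fun p _ => integrable_finset_sum _ (fun q _ => hterm_int p q))]
  have hswap2 : ∀ p : Fin (m+1) → Fin (2*n),
      (∫ ω : ∀ i : Fin m, Matrix.orthogonalGroup (Fin (L i + 2 * n)) ℝ,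
        ∑ q : Fin (m+1) → Fin (2*n),
          (if q 0 = p (Fin.last m) ∧ q (Fin.last m) = p 0 then
            ∏ k : Fin m, f p q k (ω k) else 0) ∂(Measure.pi μ))
      = ∑ q : Fin (m+1) → Fin (2*n),
          (if q 0 = p (Fin.last m) ∧ q (Fin.last m) = p 0 then
            ∏ k : Fin m, (∫ Q, f p q k Q ∂(μ k)) else 0) := by
    intro p
    rw [integral_finset_sum _ (fun q _ => hterm_int p q)]
    apply Finset.sum_congr rfl; intro q _
    by_cases hc : q 0 = p (Fin.last m) ∧ q (Fin.last m) = p 0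
    · simp only [if_pos hc]
      exact MeasureTheory.integral_fintype_prod_eq_prod (f p q)
    · simp only [if_neg hc, integral_zero]
  simp only [hswap2]
  -- compute each factor
  have hfac : ∀ (p q : Fin (m+1) → Fin (2*n)) (k : Fin m),
      (∫ Q, f p q k Q ∂(μ k))
      = if p k.castSucc = q k.castSucc ∧ p k.succ = q k.succ
        then 1 / ((L k + 2 * n : ℕ) : ℝ) else 0 := by
    intro p q k
    have hMpos : 0 < L k + 2 * n := by omega
    have h := moment hMpos (μ k) (hinv k)
      (Fin.castLE (Nat.le_add_left (2 * n) (L k)) (p k.castSucc))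
      (Fin.castLE (Nat.le_add_left (2 * n) (L k)) (p k.succ))
      (Fin.castLE (Nat.le_add_left (2 * n) (L k)) (q k.castSucc))
      (Fin.castLE (Nat.le_add_left (2 * n) (L k)) (q k.succ))
    rw [show (∫ Q, f p q k Q ∂(μ k)) = _ from h]
    congr 1
    simp only [eq_iff_iff]
    constructor
    · rintro ⟨h1, h2⟩
      exact ⟨Fin.castLE_injective _ h1, Fin.castLE_injective _ h2⟩
    · rintro ⟨h1, h2⟩
      exact ⟨congrArg _ h1, congrArg _ h2⟩
  simp only [hfac]
  -- collapse the product of indicators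
  have hprodite : ∀ (p q : Fin (m+1) → Fin (2*n)),
      (∏ k : Fin m, if p k.castSucc = q k.castSucc ∧ p k.succ = q k.succ
          then 1 / ((L k + 2 * n : ℕ) : ℝ) else 0)
      = if p = q then ∏ k : Fin m, 1 / ((L k + 2 * n : ℕ) : ℝ) else 0 := by
    intro p q
    rw [prod_ite_zero]
    congr 1
    simp only [eq_iff_iff]
    exact path_eq_iff hm p q
  simp only [hprodite]
  have hcollapse : ∀ p : Fin (m+1) → Fin (2*n),
      (∑ q : Fin (m+1) → Fin (2*n),
        (if q 0 = p (Fin.last m) ∧ q (Fin.last m) = p 0 then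
          (if p = q then ∏ k : Fin m, 1 / ((L k + 2 * n : ℕ) : ℝ) else 0) else 0))
      = if p (Fin.last m) = p 0 then ∏ k : Fin m, 1 / ((L k + 2 * n : ℕ) : ℝ) else 0 := by
    intro p
    have hT : ∀ q : Fin (m+1) → Fin (2*n),
        (if q 0 = p (Fin.last m) ∧ q (Fin.last m) = p 0 then
          (if p = q then ∏ k : Fin m, 1 / ((L k + 2 * n : ℕ) : ℝ) else 0) else 0)
        = if q = p then (if p (Fin.last m) = p 0 then ∏ k : Fin m, 1 / ((L k + 2 * n : ℕ) : ℝ) else 0) else 0 := by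
      intro q
      by_cases hpq : q = p
      · subst hpq
        by_cases hl : q (Fin.last m) = q 0
        · rw [if_pos ⟨hl.symm, hl⟩, if_pos rfl, if_pos rfl, if_pos hl]
        · rw [if_neg (fun h => hl h.2), if_pos rfl, if_neg hl]
      · rw [if_neg hpq]
        by_cases h1 : q 0 = p (Fin.last m) ∧ q (Fin.last m) = p 0
        · rw [if_pos h1, if_neg (fun h => hpq h.symm)]
        · rw [if_neg h1]
    simp only [hT]
    rw [Finset.sum_ite_eq' Finset.univ p
      (fun _ => if p (Fin.last m) = p 0 then ∏ k : Fin m, 1 / ((L k + 2 * n : ℕ) : ℝ) else 0)]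
    simp
  simp only [hcollapse]
  rw [count_loops hm]
  -- final arithmetic
  have harith : ∀ i : Fin m, (2 * n : ℝ) / ((L i : ℝ) + 2 * n)
      = ((2 * n : ℕ) : ℝ) * (1 / ((L i + 2 * n : ℕ) : ℝ)) := by
    intro i; push_cast; ring
  rw [Finset.prod_congr rfl (fun i _ => harith i), Finset.prod_mul_distrib,
    Finset.prod_const, Finset.card_univ, Fintype.card_fin]
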